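/- Let G be a finite connected graph and let P = (x_1, ..., x_ℓ) be a subpath of G (the vertices x_1, ..., x_ℓ are distinct and consecutive ones are adjacent in G). Then for any t ∈ {1, ..., ℓ}, starting from the configuration with exactly one cup on each vertex of P, there is a sequence of legal stacking moves using only vertices of P that stacks all ℓ cups onto the vertex x_t. A legal stacking move removes all r cups from a vertex x and places them onto a vertex y with at least one cup such that the distance from x to y in G equals r. -/

import Mathlib

/-- A legal cup-stacking move in the graph `G`, restricted to vertices of a set `S`:
all `r` cups on `x` are moved to a vertex `y ≠ x` that carries at least one cup,
provided the graph distance from `x` to `y` equals `r`. -/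
def CupStepOn {V : Type*} [DecidableEq V] (G : SimpleGraph V) (S : Set V) (c c' : V → ℕ) : Prop :=
  ∃ x y : V, x ∈ S ∧ y ∈ S ∧ x ≠ y ∧ 0 < c x ∧ 0 < c y ∧ G.dist x y = c x ∧
    c' = Function.update (Function.update c x 0) y (c y + c x)

/-- All cups are stacked on `t`. -/
def IsStackedOn {V : Type*} (c : V → ℕ) (t : V) : Prop := ∀ v, v ≠ t → c v = 0

section Aux

variable {V : Type*} [DecidableEq V] {G : SimpleGraph V}

/-- Distance from the head of a chain to its last element is at most the length. -/
lemma dist_chain (hG : G.Connected) :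
    ∀ (l : List V) (t : V), (t :: l).Chain' G.Adj →
      ∀ (hne : l ≠ []), G.dist t (l.getLast hne) ≤ l.length := by
  intro l
  induction l with
  | nil => intro t _ hne; exact absurd rfl hne
  | cons x l ih =>
    intro t hc hne
    have hadj : G.Adj t x := (List.isChain_cons_cons.mp hc).1
    have hc' : (x :: l).Chain' G.Adj := (List.isChain_cons_cons.mp hc).2
    have hdtx : G.dist t x = 1 := SimpleGraph.dist_eq_one_iff_adj.mpr hadj
    rcases eq_or_ne l [] with rfl | hl
    · simpa using hdtx.le
    · have h1 := ih x hc' hl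
      have hgl : (x :: l).getLast (by simp) = l.getLast hl := List.getLast_cons hl
      calc G.dist t ((x :: l).getLast (by simp))
          ≤ G.dist t x + G.dist x ((x :: l).getLast (by simp)) := hG.dist_triangle
        _ = 1 + G.dist x (l.getLast hl) := by rw [hdtx, hgl]
        _ ≤ 1 + l.length := by omega
        _ = (x :: l).length := by simp [Nat.add_comm]

/-- `MainP n`: from all-singles on a path of length ≤ `n`, we can stack everything on any
chosen vertex `t` of the path, changing nothing outside the path. -/
def MainP (G : SimpleGraph V) (S : Set V) (n : ℕ) : Prop :=
  ∀ L : List V, L.length ≤ n → L.Chain' G.Adj → L.Nodup → (∀ v ∈ L, v ∈ S) →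
  ∀ t ∈ L, ∀ c : V → ℕ, (∀ v ∈ L, c v = 1) →
  ∃ c', Relation.ReflTransGen (CupStepOn G S) c c' ∧ c' t = L.length ∧
    (∀ v ∈ L, v ≠ t → c' v = 0) ∧ (∀ v, v ∉ L → c' v = c v)

/-- `ClearP n`: a block `B` of singles forming a path hanging off an occupied vertex `t`
can be entirely stacked onto `t`. -/
def ClearP (G : SimpleGraph V) (S : Set V) (n : ℕ) : Prop :=
  ∀ B : List V, ∀ t : V, B.length ≤ n → (t :: B).Chain' G.Adj → (t :: B).Nodup →
  (∀ v ∈ t :: B, v ∈ S) →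
  ∀ c : V → ℕ, (∀ v ∈ B, c v = 1) → 0 < c t →
  ∃ c', Relation.ReflTransGen (CupStepOn G S) c c' ∧ c' t = c t + B.length ∧
    (∀ v ∈ B, c' v = 0) ∧ (∀ v, v ∉ B → v ≠ t → c' v = c v)

lemma mainP_step {S : Set V} {n : ℕ}
    (hC : ∀ m, m < n → ClearP G S m) : MainP G S n := by
  intro L hlen hchain hnodup hsub t ht c hc
  obtain ⟨A, B, rfl⟩ := List.append_of_mem ht
  -- basic chain facts
  have hchain2 := hchain
  rw [List.Chain', List.isChain_append] at hchain2
  obtain ⟨hcA, hctB, hlink⟩ := hchain2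
  -- chain on A ++ [t]
  have hcAt : (A ++ [t]).Chain' G.Adj := by
    rw [List.Chain', List.isChain_append]
    exact ⟨hcA, List.isChain_singleton t, fun x hx y hy => by
      simp at hy; subst hy; exact hlink x hx t rfl⟩
  have hcRA : (t :: A.reverse).Chain' G.Adj := by
    have : ((A ++ [t]).reverse).Chain' G.Adj := by
      rw [List.Chain', List.isChain_reverse]
      exact hcAt.imp fun a b h => h.symm
    simpa using this
  -- nodup facts
  have hnd := hnodup
  rw [List.nodup_append] at hnd
  obtain ⟨hndA, hndtB, hdisj⟩ := hnd
  obtain ⟨htB, hndB⟩ := List.nodup_cons.mp hndtB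
  have htA : t ∉ A := fun h => hdisj t h t List.mem_cons_self rfl
  have hAB : ∀ v ∈ A, v ∉ B := fun v hv hv' => hdisj v hv v (List.mem_cons_of_mem _ hv') rfl
  have hnd2 : (t :: A.reverse).Nodup := by
    rw [List.nodup_cons]
    exact ⟨by simpa using htA, by simpa using hndA⟩
  -- lengths
  have hL : A.length + B.length + 1 ≤ n := by
    have := hlen; simp [List.length_append] at this; omega
  have hlenB : B.length ≤ n - 1 := by omega
  have hlenA : A.reverse.length ≤ n - 1 := by rw [List.length_reverse]; omega
  have hn1 : n - 1 < n := by omega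
  -- clear B onto t
  obtain ⟨c₂, hrtg₂, hc₂t, hc₂B, hc₂off⟩ :=
    hC (n - 1) hn1 B t hlenB hctB hndtB
      (fun v hv => hsub v (by rcases List.mem_cons.mp hv with rfl | hv
                              · exact List.mem_append_right _ (List.mem_cons_self)
                              · exact List.mem_append_right _ (List.mem_cons_of_mem _ hv)))
      c (fun v hv => hc v (List.mem_append_right _ (List.mem_cons_of_mem _ hv)))
      (by rw [hc t (List.mem_append_right _ (List.mem_cons_self))]; omega)
  -- clear A (reversed) onto t
  obtain ⟨c₃, hrtg₃, hc₃t, hc₃A, hc₃off⟩ :=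
    hC (n - 1) hn1 A.reverse t hlenA hcRA hnd2
      (fun v hv => hsub v (by rcases List.mem_cons.mp hv with rfl | hv
                              · exact List.mem_append_right _ (List.mem_cons_self)
                              · exact List.mem_append_left _ (List.mem_reverse.mp hv)))
      c₂
      (fun v hv => by
        have hvA : v ∈ A := List.mem_reverse.mp hv
        rw [hc₂off v (hAB v hvA) (fun h => htA (h ▸ hvA))]
        exact hc v (List.mem_append_left _ hvA))
      (by rw [hc₂t, hc t (List.mem_append_right _ (List.mem_cons_self))]; omega)
  refine ⟨c₃, hrtg₂.trans hrtg₃, ?_, ?_, ?_⟩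
  · rw [hc₃t, hc₂t, hc t (List.mem_append_right _ (List.mem_cons_self))]
    simp [List.length_append]
    omega
  · intro v hv hvt
    rcases List.mem_append.mp hv with hvA | hvB
    · exact hc₃A v (List.mem_reverse.mpr hvA)
    · rcases List.mem_cons.mp hvB with rfl | hvB
      · exact absurd rfl hvt
      · rw [hc₃off v (fun h => hAB v (List.mem_reverse.mp h) hvB) hvt]
        exact hc₂B v hvB
  · intro v hv
    have hvA : v ∉ A := fun h => hv (List.mem_append_left _ h)
    have hvt : v ≠ t := fun h =>
      hv (h ▸ List.mem_append_right _ (List.mem_cons_self))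
    have hvB : v ∉ B := fun h => hv (List.mem_append_right _ (List.mem_cons_of_mem _ h))
    rw [hc₃off v (fun h => hvA (List.mem_reverse.mp h)) hvt, hc₂off v hvB hvt]

lemma clearP_step (hG : G.Connected) {S : Set V} {n : ℕ}
    (hMain : MainP G S n) (hC : ∀ m, m < n → ClearP G S m) : ClearP G S n := by
  intro B t hlen hchain hnodup hsub c hcB hct
  rcases eq_or_ne B [] with rfl | hne
  · exact ⟨c, Relation.ReflTransGen.refl, by simp, by simp, fun v _ _ => rfl⟩
  -- setup
  have hctB : B.Chain' G.Adj := (List.isChain_cons.mp hchain).2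
  obtain ⟨htB, hndB⟩ := List.nodup_cons.mp hnodup
  set x := B.getLast hne with hxdef
  have hxB : x ∈ B := List.getLast_mem hne
  have hxt : x ≠ t := fun h => htB (h ▸ hxB)
  set D := G.dist x t with hDdef
  have hD1 : 1 ≤ D := hG.pos_dist_of_ne hxt
  have hDle : D ≤ B.length := by
    have := dist_chain hG B t hchain hne
    rw [SimpleGraph.dist_comm] at this
    exact this
  -- split B into B₁ ++ B₂ with B₂ of length D
  set k := B.length - D with hkdef
  set B₁ := B.take k with hB₁
  set B₂ := B.drop k with hB₂
  have hsplit : B₁ ++ B₂ = B := List.take_append_drop k B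
  have hlenB₂ : B₂.length = D := by
    rw [hB₂, List.length_drop]; omega
  have hlenB₁ : B₁.length = k := by
    rw [hB₁, List.length_take]; omega
  have hB₂ne : B₂ ≠ [] := by
    intro h; rw [h] at hlenB₂; simp at hlenB₂; omega
  have hxB₂ : B₂.getLast hB₂ne = x := by
    have h2 : B₂.getLast hB₂ne ∈ B₂.getLast? := by
      rw [List.getLast?_eq_getLast_of_ne_nil hB₂ne]; rfl
    have h3 := List.mem_getLast?_append_of_mem_getLast? (l₁ := B₁) h2
    rw [hsplit, List.getLast?_eq_getLast_of_ne_nil hne] at h3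
    rw [Option.mem_def, Option.some_inj] at h3
    rw [hxdef]; exact h3.symm
  have hxmem : x ∈ B₂ := hxB₂ ▸ List.getLast_mem hB₂ne
  have hchainB₂ : B₂.Chain' G.Adj := by
    have := hctB; rw [← hsplit, List.Chain', List.isChain_append] at this; exact this.2.1
  have hndB' : (B₁ ++ B₂).Nodup := by rw [hsplit]; exact hndB
  have hndB₂ : B₂.Nodup := hndB'.of_append_right
  have hdisj12 : ∀ v ∈ B₁, v ∉ B₂ := by
    have := hndB'; rw [List.nodup_append] at this
    exact fun v hv hv' => this.2.2 v hv v hv' rfl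
  have hsubB : ∀ v ∈ B, v ∈ S := fun v hv => hsub v (List.mem_cons_of_mem _ hv)
  have hB₁sub : ∀ v ∈ B₁, v ∈ B := fun v hv => hsplit ▸ List.mem_append_left _ hv
  have hB₂sub : ∀ v ∈ B₂, v ∈ B := fun v hv => hsplit ▸ List.mem_append_right _ hv
  -- gather B₂ onto x
  obtain ⟨c₂, hrtg₂, hc₂x, hc₂B₂, hc₂off⟩ :=
    hMain B₂ (by omega) hchainB₂ hndB₂ (fun v hv => hsubB v (hB₂sub v hv)) x hxmem
      c (fun v hv => hcB v (hB₂sub v hv))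
  have htB₂ : t ∉ B₂ := fun h => htB (hB₂sub t h)
  have hc₂t : c₂ t = c t := hc₂off t htB₂
  -- jump the stack of size D from x onto t
  set c₃ : V → ℕ := Function.update (Function.update c₂ x 0) t (c₂ t + c₂ x) with hc₃def
  have hstep : CupStepOn G S c₂ c₃ :=
    ⟨x, t, hsubB x hxB, hsub t (List.mem_cons_self), hxt,
      by rw [hc₂x, hlenB₂]; omega, by rw [hc₂t]; omega,
      by rw [hc₂x, hlenB₂, hDdef], rfl⟩
  have hc₃t : c₃ t = c t + D := by
    rw [hc₃def]
    simp [Function.update, hc₂t, hc₂x, hlenB₂]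
  have hc₃x : c₃ x = 0 := by
    rw [hc₃def]
    simp [Function.update, hxt]
  have hc₃other : ∀ v, v ≠ t → v ≠ x → c₃ v = c₂ v := by
    intro v hvt hvx
    rw [hc₃def]
    simp [Function.update, hvt, hvx]
  -- clear B₁ onto t
  have hchainB₁ : (t :: B₁).Chain' G.Adj := by
    have h1 : ((t :: B₁) ++ B₂).Chain' G.Adj := by
      rw [List.cons_append, hsplit]; exact hchain
    exact (List.isChain_append.mp h1).1
  have hndtB₁ : (t :: B₁).Nodup := by
    have h1 : ((t :: B₁) ++ B₂).Nodup := by rw [List.cons_append, hsplit]; exact hnodup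
    exact h1.of_append_left
  have hlenB₁' : B₁.length ≤ n - 1 := by omega
  have hn1 : n - 1 < n := by omega
  obtain ⟨c₄, hrtg₄, hc₄t, hc₄B₁, hc₄off⟩ :=
    hC (n - 1) hn1 B₁ t hlenB₁' hchainB₁ hndtB₁
      (fun v hv => by rcases List.mem_cons.mp hv with rfl | hv
                      · exact hsub v (List.mem_cons_self)
                      · exact hsubB v (hB₁sub v hv))
      c₃
      (fun v hv => by
        have hvB₂ : v ∉ B₂ := hdisj12 v hv
        have hvt : v ≠ t := fun h => htB (h ▸ hB₁sub v hv)
        have hvx : v ≠ x := fun h => hvB₂ (h ▸ hxmem)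
        rw [hc₃other v hvt hvx, hc₂off v hvB₂]
        exact hcB v (hB₁sub v hv))
      (by rw [hc₃t]; omega)
  refine ⟨c₄, (hrtg₂.trans (Relation.ReflTransGen.single hstep)).trans hrtg₄, ?_, ?_, ?_⟩
  · rw [hc₄t, hc₃t, hlenB₁]; omega
  · intro v hv
    rcases List.mem_append.mp (hsplit ▸ hv) with hv₁ | hv₂
    · exact hc₄B₁ v hv₁
    · have hvt : v ≠ t := fun h => htB (h ▸ hv)
      rw [hc₄off v (fun h => hdisj12 v h hv₂) hvt]
      rcases eq_or_ne v x with rfl | hvx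
      · exact hc₃x
      · rw [hc₃other v hvt hvx]
        exact hc₂B₂ v hv₂ hvx
  · intro v hv hvt
    have hv₁ : v ∉ B₁ := fun h => hv (hB₁sub v h)
    have hv₂ : v ∉ B₂ := fun h => hv (hB₂sub v h)
    have hvx : v ≠ x := fun h => hv₂ (h ▸ hxmem)
    rw [hc₄off v hv₁ hvt, hc₃other v hvt hvx, hc₂off v hv₂]

lemma mainP_and_clearP (hG : G.Connected) (S : Set V) :
    ∀ n, MainP G S n ∧ ClearP G S n := by
  intro n
  induction n using Nat.strong_induction_on with
  | _ n ih =>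
    have hC : ∀ m, m < n → ClearP G S m := fun m hm => (ih m hm).2
    have hM : MainP G S n := mainP_step hC
    exact ⟨hM, clearP_step hG hM hC⟩

end Aux

theorem path_stackable {V : Type*} [Fintype V] [DecidableEq V] (G : SimpleGraph V)
    (hG : G.Connected) {a b : V} (P : G.Walk a b) (hP : P.IsPath) (t : V)
    (ht : t ∈ P.support) :
    ∃ c : V → ℕ,
      Relation.ReflTransGen (CupStepOn G {v | v ∈ P.support})
        (fun v => if v ∈ P.support then 1 else 0) c ∧ IsStackedOn c t := by
  obtain ⟨c', hrtg, _, hzero, hoff⟩ :=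
    (mainP_and_clearP hG {v | v ∈ P.support} P.support.length).1
      P.support le_rfl P.isChain_adj_support hP.support_nodup
      (fun v hv => hv) t ht
      (fun v => if v ∈ P.support then 1 else 0)
      (fun v hv => if_pos hv)
  refine ⟨c', hrtg, fun v hv => ?_⟩
  by_cases hvs : v ∈ P.support
  · exact hzero v hvs hv
  · rw [hoff v hvs, if_neg hvs]
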